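/- Let p be a prime and let ℤ[1/p] denote the additive group of all rational numbers of the form z/p^m with z ∈ ℤ and m ∈ ℕ. The direct sum of countably infinitely many copies of ℤ[1/p] has no automatic presentation: there do not exist a finite alphabet Σ, a regular language A ⊆ Σ*, and a binary operation on A whose graph is a regular ternary relation, such that the resulting structure is a group isomorphic to ⨁_{n∈ℕ} ℤ[1/p]. -/

import Mathlib

/-- The convolution of an `n`-tuple of words. -/
def conv {α : Type*} {n : ℕ} (w : Fin n → List α) : List (Fin n → Option α) :=
  (List.range (Finset.univ.sup fun i => (w i).length)).map fun k i => (w i)[k]?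

/-- The additive group `ℤ[1/p]` of rationals of the form `z/p^m`, `z ∈ ℤ`, `m ∈ ℕ`. -/
def ZOneOverP (p : ℕ) (hp : p.Prime) : AddSubgroup ℚ where
  carrier := {q : ℚ | ∃ (z : ℤ) (m : ℕ), q = z / p ^ m}
  zero_mem' := ⟨0, 0, by simp⟩
  add_mem' := by
    rintro a b ⟨z₁, m₁, rfl⟩ ⟨z₂, m₂, rfl⟩
    have hp0 : (p : ℚ) ≠ 0 := by exact_mod_cast hp.ne_zero
    refine ⟨z₁ * p ^ m₂ + z₂ * p ^ m₁, m₁ + m₂, ?_⟩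
    push_cast
    rw [pow_add]
    field_simp
  neg_mem' := by
    rintro a ⟨z, m, rfl⟩
    exact ⟨-z, m, by push_cast; ring⟩

/-! ### Auxiliary lemmas about `conv` -/

theorem conv_length {α : Type*} {n : ℕ} (w : Fin n → List α) :
    (conv w).length = Finset.univ.sup fun i => (w i).length := by
  simp [conv]

theorem conv_getElem? {α : Type*} {n : ℕ} (w : Fin n → List α) (k : ℕ) :
    (conv w)[k]? = if k < (conv w).length then some (fun i => (w i)[k]?) else none := by
  by_cases hk : k < (conv w).length
  · rw [if_pos hk]
    rw [conv_length] at hk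
    simp [conv, hk]
  · rw [if_neg hk, List.getElem?_eq_none_iff]
    omega

theorem length_le_conv_length {α : Type*} {n : ℕ} (w : Fin n → List α) (i : Fin n) :
    (w i).length ≤ (conv w).length := by
  rw [conv_length]
  exact Finset.le_sup (f := fun i => (w i).length) (Finset.mem_univ i)

theorem conv_inj {α : Type*} {n : ℕ} {w w' : Fin n → List α} (h : conv w = conv w') : w = w' := by
  have hlen : (conv w).length = (conv w').length := by rw [h]
  funext i
  apply List.ext_getElem?
  intro k
  by_cases hk : k < (conv w).length
  · have h1 := conv_getElem? w k
    rw [if_pos hk, h, conv_getElem? w' k, if_pos (hlen ▸ hk)] at h1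
    exact (congrFun (Option.some_injective _ h1) i).symm
  · have l1 : (w i).length ≤ k := le_trans (length_le_conv_length w i) (by omega)
    have l2 : (w' i).length ≤ k := le_trans (length_le_conv_length w' i) (by omega)
    rw [List.getElem?_eq_none l1, List.getElem?_eq_none l2]

theorem sup3 {Γ : Type*} (u v w : List Γ) :
    (Finset.univ.sup fun i => ((![u,v,w]) i).length) = max u.length (max v.length w.length) := by
  rw [show (Finset.univ : Finset (Fin 3)) = {0, 1, 2} by decide]
  simp [max_assoc]

theorem conv3_split {Γ : Type*} (x y z : List Γ) (m : ℕ)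
    (hx : x.length ≤ m) (hy : y.length ≤ m) (hm : m ≤ z.length) :
    conv ![x, y, z] =
      conv ![x, y, z.take m] ++ (z.drop m).map (fun a => ![none, none, some a]) := by
  have L1 : (conv ![x,y,z]).length = z.length := by rw [conv_length, sup3]; omega
  have L2 : (conv ![x,y,z.take m]).length = m := by
    rw [conv_length, sup3, List.length_take]; omega
  apply List.ext_getElem?
  intro k
  rw [conv_getElem?]
  by_cases h1 : k < m
  · rw [if_pos (by omega : k < (conv ![x,y,z]).length),
      List.getElem?_append_left (by rw [L2]; omega),
      conv_getElem?, if_pos (by omega)]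
    congr 1
    funext i
    fin_cases i
    · simp
    · simp
    · simp [List.getElem?_take, h1]
  · by_cases h2 : k < z.length
    · rw [if_pos (by omega), List.getElem?_append_right (by rw [L2]; omega), L2,
        List.getElem?_map]
      have hd : (z.drop m)[k - m]? = z[k]? := by
        rw [List.getElem?_drop]; congr 1; omega
      rw [hd, List.getElem?_eq_getElem h2, Option.map_some]
      congr 1
      funext i
      fin_cases i
      · simp [List.getElem?_eq_none (by omega : x.length ≤ k)]
      · simp [List.getElem?_eq_none (by omega : y.length ≤ k)]
      · simp [List.getElem?_eq_getElem h2]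
    · rw [if_neg (by omega)]
      symm
      rw [List.getElem?_eq_none_iff]
      simp [L2, List.length_drop]
      omega

/-! ### A pumping lemma for the tail of words in a regular language -/

theorem tail_pump {β : Type*} {L : Language β} (h : L.IsRegular) :
    ∃ N : ℕ, 1 ≤ N ∧ ∀ u v : List β, u ++ v ∈ L → N ≤ v.length →
      ∃ j₁ j₂ : ℕ, j₁ < j₂ ∧ j₂ ≤ v.length ∧ u ++ (v.take j₁ ++ v.drop j₂) ∈ L := by
  obtain ⟨σ, _, M, rfl⟩ := h
  refine ⟨Fintype.card σ + 1, le_add_self, fun u v huv hlen => ?_⟩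
  obtain ⟨n, m, hneq, heq⟩ :=
    Fintype.exists_ne_map_eq_of_card_lt
      (fun j : Fin (Fintype.card σ + 1) => M.evalFrom (M.eval u) (v.take j)) (by simp)
  wlog hle : (n : ℕ) ≤ m generalizing n m
  · exact this m n hneq.symm heq.symm (le_of_not_ge hle)
  refine ⟨n, m, lt_of_le_of_ne hle (fun hc => hneq (Fin.ext hc)),
    le_trans (Nat.le_of_lt_succ m.isLt) (le_trans (Nat.le_succ _) hlen), ?_⟩
  have key : M.eval (u ++ (v.take n ++ v.drop m)) = M.eval (u ++ v) := by
    simp only [DFA.eval, DFA.evalFrom_of_append]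
    have h1 : M.evalFrom (M.evalFrom M.start u) (v.take (n:ℕ)) =
        M.evalFrom (M.evalFrom M.start u) (v.take (m:ℕ)) := heq
    calc M.evalFrom (M.evalFrom (M.evalFrom M.start u) (v.take (n:ℕ))) (v.drop (m:ℕ))
        = M.evalFrom (M.evalFrom (M.evalFrom M.start u) (v.take (m:ℕ))) (v.drop (m:ℕ)) := by
          rw [h1]
      _ = M.evalFrom (M.evalFrom M.start u) (v.take (m:ℕ) ++ v.drop (m:ℕ)) := by
          rw [DFA.evalFrom_of_append]
      _ = M.evalFrom (M.evalFrom M.start u) v := by rw [List.take_append_drop]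
  rw [DFA.mem_accepts] at huv ⊢
  rw [key]
  exact huv

/-! ### The length of a sum is bounded by the max of the lengths plus a constant -/

theorem add_length_bound {Γ : Type*} {A : Set (List Γ)} (add : A → A → A) {N : ℕ} (hN : 1 ≤ N)
    (hpump : ∀ u v : List (Fin 3 → Option Γ),
      u ++ v ∈ {w | ∃ x y : A, w = conv ![(x : List Γ), (y : List Γ), (add x y : List Γ)]} →
      N ≤ v.length →
      ∃ j₁ j₂ : ℕ, j₁ < j₂ ∧ j₂ ≤ v.length ∧ u ++ (v.take j₁ ++ v.drop j₂) ∈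
        {w | ∃ x y : A, w = conv ![(x : List Γ), (y : List Γ), (add x y : List Γ)]})
    (x y : A) :
    ((add x y : A) : List Γ).length ≤ max (x : List Γ).length (y : List Γ).length + N := by
  by_contra hc
  push_neg at hc
  set z : List Γ := ((add x y : A) : List Γ) with hz
  set m : ℕ := max (x : List Γ).length (y : List Γ).length with hmdef
  have hm : m ≤ z.length := by omega
  have hsplit := conv3_split (x : List Γ) (y : List Γ) z m (le_max_left _ _) (le_max_right _ _) hm
  have hmem : conv ![(x : List Γ), (y : List Γ), z] ∈
      {w | ∃ x' y' : A, w = conv ![(x' : List Γ), (y' : List Γ), (add x' y' : List Γ)]} :=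
    ⟨x, y, rfl⟩
  rw [hsplit] at hmem
  have hvlen0 : ((z.drop m).map (fun a => (![none, none, some a] : Fin 3 → Option Γ))).length
      = z.length - m := by simp
  obtain ⟨j₁, j₂, hj12, hj2, hpumped⟩ := hpump _ _ hmem (by rw [hvlen0]; omega)
  set v := (z.drop m).map (fun a => ![none, none, some a]) with hv
  have hvtd : v.take j₁ ++ v.drop j₂ =
      ((z.drop m).take j₁ ++ (z.drop m).drop j₂).map (fun a => ![none, none, some a]) := by
    rw [hv, ← List.map_take, ← List.map_drop, ← List.map_append]
  set z' : List Γ := z.take m ++ ((z.drop m).take j₁ ++ (z.drop m).drop j₂) with hz'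
  have hz'len : z'.length = m + (j₁ + (z.length - m - j₂)) := by
    simp [hz', List.length_take, List.length_drop]
    omega
  have htk : z'.take m = z.take m := List.take_left' (by simp [List.length_take]; omega)
  have hdr : z'.drop m = (z.drop m).take j₁ ++ (z.drop m).drop j₂ :=
    List.drop_left' (by simp [List.length_take]; omega)
  have hsplit' := conv3_split (x : List Γ) (y : List Γ) z' m (le_max_left _ _) (le_max_right _ _)
    (by rw [hz'len]; omega)
  rw [htk, hdr] at hsplit'
  rw [hvtd, ← hsplit'] at hpumped
  obtain ⟨x', y', hxy'⟩ := hpumped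
  have := conv_inj hxy'
  have hx' : (x : List Γ) = (x' : List Γ) := by
    have := congrFun this 0; simpa using this
  have hy' : (y : List Γ) = (y' : List Γ) := by
    have := congrFun this 1; simpa using this
  have hz'' : z' = ((add x' y' : A) : List Γ) := by
    have := congrFun this 2; simpa using this
  have hxx : x' = x := Subtype.ext hx'.symm
  have hyy : y' = y := Subtype.ext hy'.symm
  rw [hxx, hyy, ← hz] at hz''
  have : z'.length = z.length := by rw [hz'']
  have hvlen : v.length = z.length - m := by simp [hv]
  omega

/-! ### Group-theoretic auxiliary facts -/

def one1 (p : ℕ) (hp : p.Prime) : ZOneOverP p hp := ⟨(1 : ℚ), ⟨1, 0, by simp⟩⟩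

def delta (p : ℕ) (hp : p.Prime) (i : ℕ) : DirectSum ℕ (fun _ => ZOneOverP p hp) :=
  DirectSum.of (fun _ => ZOneOverP p hp) i (one1 p hp)

theorem delta_inj (p : ℕ) (hp : p.Prime) {k t : ℕ} {a b : Fin k → Fin (2^t)}
    (h : (∑ i, (a i : ℕ) • delta p hp i) = (∑ i, (b i : ℕ) • delta p hp i)) : a = b := by
  funext i₀
  have happ := congrFun (congrArg (DFunLike.coe) h) (i₀ : ℕ)
  rw [DFinsupp.finset_sum_apply, DFinsupp.finset_sum_apply] at happ
  have hcompute : ∀ (c : Fin k → Fin (2^t)),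
      (∑ i : Fin k, ((c i : ℕ) • delta p hp i) (i₀ : ℕ)) = (c i₀ : ℕ) • one1 p hp := by
    intro c
    rw [Finset.sum_eq_single i₀]
    · rw [DFinsupp.smul_apply, delta, DirectSum.of_eq_same]
    · intro i _ hne
      rw [DFinsupp.smul_apply, delta, DirectSum.of_eq_of_ne _ _ _ (by
        exact fun hc => hne (Fin.ext (by exact_mod_cast hc.symm))), smul_zero]
    · intro hy; exact absurd (Finset.mem_univ i₀) hy
  rw [hcompute a, hcompute b] at happ
  have : ((a i₀ : ℕ) : ℚ) = ((b i₀ : ℕ) : ℚ) := by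
    have := congrArg (fun q : ZOneOverP p hp => (q : ℚ)) happ
    simpa [one1] using this
  exact Fin.ext (by exact_mod_cast this)

/-- The direct sum of countably infinitely many copies of `ℤ[1/p]` has no automatic
presentation. -/
theorem directSum_ZOneOverP_not_automatic (p : ℕ) (hp : p.Prime) :
    ¬ ∃ (Γ : Type) (_ : Fintype Γ) (A : Set (List Γ)) (add : A → A → A)
        (e : DirectSum ℕ (fun _ => ZOneOverP p hp) ≃ A),
        Language.IsRegular (A : Language Γ) ∧
        Language.IsRegular
          {w | ∃ x y : A, w = conv ![(x : List Γ), (y : List Γ), (add x y : List Γ)]} ∧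
        ∀ x y : DirectSum ℕ (fun _ => ZOneOverP p hp),
          e (x + y) = add (e x) (e y) := by
  rintro ⟨Γ, instΓ, A, add, e, -, hR, hadd⟩
  obtain ⟨N, hN, hpump⟩ := tail_pump hR
  have hlen := add_length_bound add hN hpump
  set L : DirectSum ℕ (fun _ => ZOneOverP p hp) → ℕ :=
    fun g => ((e g : A) : List Γ).length with hLdef
  have hadd' : ∀ g h, L (g + h) ≤ max (L g) (L h) + N := by
    intro g h
    have h1 : L (g + h) = ((add (e g) (e h) : A) : List Γ).length := by
      rw [hLdef]; simp only; rw [hadd]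
    rw [h1]
    exact hlen (e g) (e h)
  have hsmul : ∀ (t : ℕ) (a : ℕ), a ≤ 2^t → ∀ g, L (a • g) ≤ max (L g) (L 0) + N*t := by
    intro t
    induction t with
    | zero =>
      intro a ha g
      interval_cases a
      · simpa using le_max_right (L g) (L 0)
      · simpa using le_max_left (L g) (L 0)
    | succ t ih =>
      intro a ha g
      have hpow : 2^(t+1) = 2^t + 2^t := by rw [pow_succ]; omega
      have h1 : min a (2^t) ≤ 2^t := min_le_right _ _
      have h2 : a - min a (2^t) ≤ 2^t := by omega
      have hsum : a = min a (2^t) + (a - min a (2^t)) := by omega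
      calc L (a • g) = L ((min a (2^t)) • g + (a - min a (2^t)) • g) := by
            rw [← add_nsmul, ← hsum]
        _ ≤ max (L ((min a (2^t)) • g)) (L ((a - min a (2^t)) • g)) + N := hadd' _ _
        _ ≤ (max (L g) (L 0) + N*t) + N :=
            Nat.add_le_add_right (max_le (ih _ h1 g) (ih _ h2 g)) N
        _ = max (L g) (L 0) + N*(t+1) := by rw [Nat.mul_succ, add_assoc]
  have hsumL : ∀ (k : ℕ) (f : Fin k → DirectSum ℕ (fun _ => ZOneOverP p hp)) (n₁ : ℕ),
      (∀ i, L (f i) ≤ n₁) → L 0 ≤ n₁ → L (∑ i, f i) ≤ n₁ + N*k := by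
    intro k
    induction k with
    | zero =>
      intro f n₁ _ h0
      simpa using h0
    | succ k ih =>
      intro f n₁ hf h0
      rw [Fin.sum_univ_succ]
      calc L (f 0 + ∑ i : Fin k, f i.succ)
          ≤ max (L (f 0)) (L (∑ i : Fin k, f i.succ)) + N := hadd' _ _
        _ ≤ max n₁ (n₁ + N*k) + N :=
            Nat.add_le_add_right (max_le_max (hf 0) (ih _ _ (fun i => hf i.succ) h0)) N
        _ = n₁ + N*(k+1) := by
            rw [max_eq_right (Nat.le_add_right _ _), Nat.mul_succ, add_assoc]
  -- parameters
  set c : ℕ := Fintype.card Γ with hcdef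
  set k : ℕ := N*(c+1)+1 with hkdef
  set n₀ : ℕ := (Finset.univ.sup fun i : Fin k => L (delta p hp i)) ⊔ L 0 with hn₀def
  set t : ℕ := (c+1)^(n₀+N*k+1) with htdef
  set M : ℕ := n₀ + N*t + N*k with hMdef
  set g : (Fin k → Fin (2^t)) → DirectSum ℕ (fun _ => ZOneOverP p hp) :=
    fun a => ∑ i, (a i : ℕ) • delta p hp i with hgdef
  have hLg : ∀ a, L (g a) ≤ M := by
    intro a
    refine le_trans (hsumL k _ (n₀ + N*t) (fun i => ?_) ?_) (by rw [hMdef])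
    · refine le_trans (hsmul t (a i) (a i).isLt.le _) (Nat.add_le_add_right ?_ _)
      exact max_le
        (le_trans (Finset.le_sup (f := fun i : Fin k => L (delta p hp i)) (Finset.mem_univ i))
          (le_max_left _ _))
        (le_max_right _ _)
    · exact le_trans (le_max_right _ _) (Nat.le_add_right _ _)
  -- the injection into short words
  set F : (Fin k → Fin (2^t)) → (Fin (M+1) → Option Γ) :=
    fun a j => ((e (g a) : A) : List Γ)[(j : ℕ)]? with hFdef
  have hF : Function.Injective F := by
    intro a b hab
    have hlists : ((e (g a) : A) : List Γ) = ((e (g b) : A) : List Γ) := by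
      apply List.ext_getElem?
      intro k'
      by_cases hk' : k' < M + 1
      · exact congrFun hab ⟨k', hk'⟩
      · rw [List.getElem?_eq_none (le_trans (le_trans (hLg a) (by omega)) (le_refl _)),
          List.getElem?_eq_none (le_trans (le_trans (hLg b) (by omega)) (le_refl _))]
    have : e (g a) = e (g b) := Subtype.ext hlists
    exact delta_inj p hp (e.injective this)
  have hcard := Fintype.card_le_of_injective F hF
  simp only [Fintype.card_fun, Fintype.card_fin, Fintype.card_option] at hcard
  rw [← hcdef] at hcard
  -- so (2^t)^k ≤ (c+1)^(M+1); derive the contradiction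
  have key : 2^(t*k) ≤ (c+1)^(M+1) := by rw [pow_mul]; exact hcard
  have h2k : 2*(c+1)^N ≤ 2^k := by
    calc 2*(c+1)^N ≤ 2*((2^(c+1))^N) := by
          exact Nat.mul_le_mul_left 2 (Nat.pow_le_pow_left (Nat.lt_two_pow_self).le N)
      _ = 2^k := by
          rw [hkdef, mul_comm 2 ((2^(c+1))^N), ← pow_mul, ← pow_succ, mul_comm (c+1) N]
  have hbig : (c+1)^(M+1) < 2^(t*k) := by
    have hM1 : M+1 = (n₀+N*k+1) + N*t := by omega
    calc (c+1)^(M+1) = (c+1)^(n₀+N*k+1) * (c+1)^(N*t) := by rw [hM1, pow_add]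
      _ = t * ((c+1)^N)^t := by rw [← htdef, pow_mul]
      _ < 2^t * ((c+1)^N)^t := by
          exact Nat.mul_lt_mul_of_lt_of_le (Nat.lt_two_pow_self (n := t)) (le_refl _)
            (Nat.pow_pos (Nat.pow_pos (by omega)))
      _ = (2*(c+1)^N)^t := by rw [mul_pow]
      _ ≤ (2^k)^t := Nat.pow_le_pow_left h2k t
      _ = 2^(t*k) := by rw [← pow_mul, mul_comm]
  omega
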